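/- Distance between the incenter and the orthocenter. Let ABC be a nondegenerate triangle with a = dist B C, b = dist C A, c = dist A B and semiperimeter p = (a + b + c)/2; let O be its circumcenter, R its circumradius, H its orthocenter, I its incenter and r its inradius. Then dist I H ^ 2 = 4R² + 4Rr + 3r² − p². -/

import Mathlib

open scoped RealInnerProductSpace

noncomputable section
local notation "E" => EuclideanSpace ℝ (Fin 2)

lemma aux_perp_eq_zero (e f D : E) (hli : LinearIndependent ℝ ![e, f])
    (h1 : ⟪D, e⟫ = 0) (h2 : ⟪D, f⟫ = 0) : D = 0 := by
  have htop : Submodule.span ℝ (Set.range ![e, f]) = ⊤ :=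
    hli.span_eq_top_of_card_eq_finrank (by simp)
  have hrange : Set.range ![e, f] = {e, f} := by
    ext x; simp [Fin.exists_fin_two]; tauto
  have hD : D ∈ Submodule.span ℝ ({e, f} : Set E) := by
    rw [← hrange, htop]; trivial
  obtain ⟨s, t, hst⟩ := Submodule.mem_span_pair.mp hD
  have h0 : ⟪D, D⟫ = 0 := by
    nth_rewrite 2 [← hst]
    rw [inner_add_right, real_inner_smul_right, real_inner_smul_right, h1, h2]; ring
  exact inner_self_eq_zero.mp h0

lemma aux_infDist_line_sq (P Q X : E) (h : P ≠ Q) :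
    Metric.infDist X (affineSpan ℝ {P, Q} : Set E) ^ 2
      = ‖X - P‖ ^ 2 - ⟪X - P, Q - P⟫ ^ 2 / ‖Q - P‖ ^ 2 := by
  set d : E := Q - P with hd
  have hdn : ‖d‖ ≠ 0 := by
    simpa [hd, sub_eq_zero] using fun hh => h hh.symm
  set t₀ : ℝ := ⟪X - P, d⟫ / ‖d‖ ^ 2 with ht₀
  set F : E := t₀ • d + P with hF
  have hFmem : F ∈ (affineSpan ℝ {P, Q} : Set E) := by
    have := AffineMap.lineMap_mem_affineSpan_pair (k := ℝ) t₀ P Q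
    simpa [AffineMap.lineMap_apply, hF, hd, vsub_eq_sub, vadd_eq_add] using this
  have hsm : ‖t₀ • d‖ ^ 2 = t₀ ^ 2 * ‖d‖ ^ 2 := by
    rw [norm_smul, mul_pow, Real.norm_eq_abs, sq_abs]
  have hdistF : dist X F ^ 2 = ‖X - P‖ ^ 2 - ⟪X - P, d⟫ ^ 2 / ‖d‖ ^ 2 := by
    have h1 : X - F = (X - P) - t₀ • d := by rw [hF]; abel
    have h2 : dist X F ^ 2 = ‖X - P‖ ^ 2 - 2 * (t₀ * ⟪X - P, d⟫) + t₀ ^ 2 * ‖d‖ ^ 2 := by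
      rw [dist_eq_norm, h1, norm_sub_sq_real, real_inner_smul_right, hsm]
    rw [h2, ht₀]
    generalize ⟪X - P, d⟫ = ip
    generalize hnd : ‖d‖ = nd at hdn ⊢
    field_simp
    ring
  have hlow : ∀ y ∈ (affineSpan ℝ {P, Q} : Set E), dist X F ≤ dist X y := by
    intro y hy
    obtain ⟨t, ht⟩ := vadd_left_mem_affineSpan_pair.mp (show (y -ᵥ P) +ᵥ P ∈ affineSpan ℝ {P, Q} by rw [vsub_vadd]; exact hy)
    have hyP : y - P = t • d := by
      rw [hd]; simpa [vsub_eq_sub, eq_comm] using ht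
    have h1 : X - y = (X - P) - t • d := by
      have : y = t • d + P := by rw [← hyP]; abel
      rw [this]; abel
    have h2 : dist X y ^ 2 = ‖X - P‖ ^ 2 - 2 * (t * ⟪X - P, d⟫) + t ^ 2 * ‖d‖ ^ 2 := by
      have hsm' : ‖t • d‖ ^ 2 = t ^ 2 * ‖d‖ ^ 2 := by rw [norm_smul, mul_pow, Real.norm_eq_abs, sq_abs]
      rw [dist_eq_norm, h1, norm_sub_sq_real, real_inner_smul_right, hsm']
    have h3 : dist X F ^ 2 ≤ dist X y ^ 2 := by
      rw [h2, hdistF]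
      generalize ⟪X - P, d⟫ = ip
      generalize hnd : ‖d‖ = nd at hdn ⊢
      have e : (t * nd - ip / nd) ^ 2 = t ^ 2 * nd ^ 2 - 2 * (t * ip) + ip ^ 2 / nd ^ 2 := by
        field_simp; ring
      linarith [sq_nonneg (t * nd - ip / nd), e.symm.le, e.le]
    exact le_of_pow_le_pow_left₀ two_ne_zero dist_nonneg h3
  have hinf : Metric.infDist X (affineSpan ℝ {P, Q} : Set E) = dist X F := by
    refine le_antisymm (Metric.infDist_le_dist_of_mem hFmem) ?_
    by_contra hlt
    push_neg at hlt
    obtain ⟨y, hy, hdy⟩ := (Metric.infDist_lt_iff ⟨F, hFmem⟩).mp hlt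
    exact absurd hdy (not_lt.mpr (hlow y hy))
  rw [hinf, hdistF]

set_option maxHeartbeats 1000000 in
/-- Distance between the incenter and the orthocenter:
`IH² = 4R² + 4Rr + 3r² − p²`. -/
theorem dist_incenter_orthocenter_sq
    (A B C O H I : EuclideanSpace ℝ (Fin 2)) (R r p : ℝ)
    (hT : AffineIndependent ℝ ![A, B, C])
    (hp : p = (dist B C + dist C A + dist A B) / 2)
    (hO : dist O A = R ∧ dist O B = R ∧ dist O C = R)
    (hH₁ : (inner ℝ (H - A) (B - C) : ℝ) = 0)
    (hH₂ : (inner ℝ (H - B) (C - A) : ℝ) = 0)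
    (hH₃ : (inner ℝ (H - C) (A - B) : ℝ) = 0)
    (hI : I = (dist B C / (dist B C + dist C A + dist A B)) • A +
      (dist C A / (dist B C + dist C A + dist A B)) • B +
      (dist A B / (dist B C + dist C A + dist A B)) • C)
    (hr : r = Metric.infDist I (affineSpan ℝ {B, C} : Set (EuclideanSpace ℝ (Fin 2)))) :
    dist I H ^ 2 = 4 * R ^ 2 + 4 * R * r + 3 * r ^ 2 - p ^ 2 := by
  obtain ⟨hOA, hOB, hOC⟩ := hO
  set a := dist B C with ha
  set b := dist C A with hb
  set c := dist A B with hc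
  -- distinct vertices
  have hABne : A ≠ B := by
    have := hT.injective.ne (show (0 : Fin 3) ≠ 1 by decide); simpa using this
  have hBCne : B ≠ C := by
    have := hT.injective.ne (show (1 : Fin 3) ≠ 2 by decide); simpa using this
  have hCAne : C ≠ A := by
    have := hT.injective.ne (show (2 : Fin 3) ≠ 0 by decide); simpa using this
  have ha0 : 0 < a := dist_pos.mpr hBCne
  have hb0 : 0 < b := dist_pos.mpr hCAne
  have hc0 : 0 < c := dist_pos.mpr hABne
  have hsne : a + b + c ≠ 0 := by positivity
  -- norms from the circumcenter
  have hu : ‖A - O‖ = R := by rw [← dist_eq_norm, dist_comm]; exact hOA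
  have hv : ‖B - O‖ = R := by rw [← dist_eq_norm, dist_comm]; exact hOB
  have hw : ‖C - O‖ = R := by rw [← dist_eq_norm, dist_comm]; exact hOC
  have hnAB : ‖A - B‖ = c := by rw [hc, dist_eq_norm]
  have hnBC : ‖B - C‖ = a := by rw [ha, dist_eq_norm]
  have hnCA : ‖C - A‖ = b := by rw [hb, dist_eq_norm]
  -- polarization
  have pol : ∀ x y : E, ⟪x, y⟫ = (‖x‖ ^ 2 + ‖y‖ ^ 2 - ‖x - y‖ ^ 2) / 2 := by
    intro x y; have := norm_sub_sq_real x y; linarith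
  have huu : ⟪A - O, A - O⟫ = R ^ 2 := by rw [real_inner_self_eq_norm_sq, hu]
  have hvv : ⟪B - O, B - O⟫ = R ^ 2 := by rw [real_inner_self_eq_norm_sq, hv]
  have hww : ⟪C - O, C - O⟫ = R ^ 2 := by rw [real_inner_self_eq_norm_sq, hw]
  have huv : ⟪A - O, B - O⟫ = R ^ 2 - c ^ 2 / 2 := by
    rw [pol, show (A - O) - (B - O) = A - B by abel, hnAB, hu, hv]; ring
  have huw : ⟪A - O, C - O⟫ = R ^ 2 - b ^ 2 / 2 := by
    rw [pol, show (A - O) - (C - O) = -(C - A) by abel, norm_neg, hnCA, hu, hw]; ring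
  have hvw : ⟪B - O, C - O⟫ = R ^ 2 - a ^ 2 / 2 := by
    rw [pol, show (B - O) - (C - O) = B - C by abel, hnBC, hv, hw]; ring
  have hvu : ⟪B - O, A - O⟫ = R ^ 2 - c ^ 2 / 2 := by rw [real_inner_comm]; exact huv
  have hwu : ⟪C - O, A - O⟫ = R ^ 2 - b ^ 2 / 2 := by rw [real_inner_comm]; exact huw
  have hwv : ⟪C - O, B - O⟫ = R ^ 2 - a ^ 2 / 2 := by rw [real_inner_comm]; exact hvw
  -- more side-vector inner products
  have f1 : ⟪B - O, B - C⟫ = a ^ 2 / 2 := by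
    rw [pol, show (B - O) - (B - C) = C - O by abel, hv, hw, hnBC]; ring
  have f2 : ⟪C - O, C - B⟫ = a ^ 2 / 2 := by
    rw [pol, show (C - O) - (C - B) = B - O by abel, hw, hv,
      show ‖C - B‖ = a by rw [show C - B = -(B - C) by abel, norm_neg, hnBC]]
    ring
  have f3 : ⟪C - O, C - A⟫ = b ^ 2 / 2 := by
    rw [pol, show (C - O) - (C - A) = A - O by abel, hw, hu, hnCA]; ring
  have f4 : ⟪A - O, A - C⟫ = b ^ 2 / 2 := by
    rw [pol, show (A - O) - (A - C) = C - O by abel, hu, hw,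
      show ‖A - C‖ = b by rw [show A - C = -(C - A) by abel, norm_neg, hnCA]]
    ring
  -- linear independence of two side vectors
  have hncol : ¬ Collinear ℝ ({A, B, C} : Set E) :=
    affineIndependent_iff_not_collinear_set.mp hT
  have hli : LinearIndependent ℝ ![B - C, C - A] := by
    rw [LinearIndependent.pair_iff]
    intro s t hst
    by_contra hcon
    apply hncol
    rw [collinear_iff_of_mem (Set.mem_insert A {B, C})]
    by_cases hs : s = 0
    · have ht : t ≠ 0 := fun h0 => hcon ⟨hs, h0⟩
      have hCA : C = A := by
        have h1 : t • (C - A) = 0 := by rw [hs, zero_smul, zero_add] at hst; exact hst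
        have h2 := (smul_eq_zero.mp h1).resolve_left ht
        rwa [sub_eq_zero] at h2
      refine ⟨B - A, fun x hx => ?_⟩
      simp only [Set.mem_insert_iff, Set.mem_singleton_iff] at hx
      rcases hx with hx | hx | hx <;> rw [hx]
      · exact ⟨0, by simp⟩
      · exact ⟨1, by simp [vadd_eq_add]⟩
      · exact ⟨0, by simp [hCA]⟩
    · refine ⟨C - A, fun x hx => ?_⟩
      simp only [Set.mem_insert_iff, Set.mem_singleton_iff] at hx
      rcases hx with hx | hx | hx <;> rw [hx]
      · exact ⟨0, by simp⟩
      · refine ⟨1 - t / s, ?_⟩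
        have hkey : s • (B - ((1 - t / s) • (C - A) + A)) = s • (B - C) + t • (C - A) := by
          match_scalars <;> field_simp <;> ring
        rw [hst] at hkey
        have h0 := (smul_eq_zero.mp hkey).resolve_left hs
        rw [sub_eq_zero] at h0
        simpa [vadd_eq_add] using h0
      · exact ⟨1, by simp [vadd_eq_add]⟩
  -- the orthocenter is A + B + C - 2O
  have hd1 : ⟪(A + B + C - (2 : ℝ) • O) - H, B - C⟫ = 0 := by
    rw [show (A + B + C - (2 : ℝ) • O) - H = (A - H) + ((B - O) + (C - O)) by module,
      inner_add_left, inner_add_left]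
    have e1 : ⟪A - H, B - C⟫ = 0 := by
      rw [show A - H = -(H - A) by abel, inner_neg_left, hH₁, neg_zero]
    have e3 : ⟪C - O, B - C⟫ = -(a ^ 2 / 2) := by
      rw [show B - C = -(C - B) by abel, inner_neg_right, f2]
    rw [e1, f1, e3]; ring
  have hd2 : ⟪(A + B + C - (2 : ℝ) • O) - H, C - A⟫ = 0 := by
    rw [show (A + B + C - (2 : ℝ) • O) - H = (B - H) + ((C - O) + (A - O)) by module,
      inner_add_left, inner_add_left]
    have e1 : ⟪B - H, C - A⟫ = 0 := by
      rw [show B - H = -(H - B) by abel, inner_neg_left, hH₂, neg_zero]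
    have e3 : ⟪A - O, C - A⟫ = -(b ^ 2 / 2) := by
      rw [show C - A = -(A - C) by abel, inner_neg_right, f4]
    rw [e1, f3, e3]; ring
  have hH : H = A + B + C - (2 : ℝ) • O := by
    have h0 := aux_perp_eq_zero (B - C) (C - A) _ hli hd1 hd2
    rw [sub_eq_zero] at h0
    exact h0.symm
  -- (a+b+c) • (I - H) as a combination with polynomial coefficients
  have hIHvec : (a + b + c) • (I - H) = (-(b + c)) • (A - O) + (-(c + a)) • (B - O)
      + (-(a + b)) • (C - O) := by
    rw [hI, hH]; match_scalars <;> field_simp <;> ring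
  have hE1' : dist I H ^ 2 * (a + b + c) ^ 2 = 4 * R ^ 2 * (a + b + c) ^ 2
      - ((c + a) * (a + b) * a ^ 2 + (a + b) * (b + c) * b ^ 2 + (b + c) * (c + a) * c ^ 2) := by
    have hsq : (a + b + c) ^ 2 * dist I H ^ 2
        = ⟪(a + b + c) • (I - H), (a + b + c) • (I - H)⟫ := by
      rw [real_inner_smul_left, real_inner_smul_right, dist_eq_norm,
        real_inner_self_eq_norm_sq]
      ring
    rw [hIHvec] at hsq
    simp only [inner_add_left, inner_add_right, real_inner_smul_left, real_inner_smul_right,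
      huu, hvv, hww, huv, hvu, huw, hwu, hvw, hwv] at hsq
    linear_combination hsq
  -- incenter minus B
  have hIB : (a + b + c) • (I - B) = a • (A - B) + c • (C - B) := by
    rw [hI]; match_scalars <;> field_simp <;> ring
  have gAA : ⟪A - B, A - B⟫ = c ^ 2 := by rw [real_inner_self_eq_norm_sq, hnAB]
  have gCC : ⟪C - B, C - B⟫ = a ^ 2 := by
    rw [real_inner_self_eq_norm_sq, show C - B = -(B - C) by abel, norm_neg, hnBC]
  have gAC : ⟪A - B, C - B⟫ = (c ^ 2 + a ^ 2 - b ^ 2) / 2 := by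
    rw [pol, show (A - B) - (C - B) = -(C - A) by abel, norm_neg, hnAB, hnCA,
      show ‖C - B‖ = a by rw [show C - B = -(B - C) by abel, norm_neg, hnBC]]
  have gCA : ⟪C - B, A - B⟫ = (c ^ 2 + a ^ 2 - b ^ 2) / 2 := by rw [real_inner_comm]; exact gAC
  -- the inradius squared
  have hE2' : r ^ 2 * (4 * (a + b + c) ^ 2)
      = 2 * a ^ 2 * b ^ 2 + 2 * b ^ 2 * c ^ 2 + 2 * c ^ 2 * a ^ 2 - a ^ 4 - b ^ 4 - c ^ 4 := by
    have h1 : r ^ 2 = ‖I - B‖ ^ 2 - ⟪I - B, C - B⟫ ^ 2 / ‖C - B‖ ^ 2 := by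
      rw [hr, aux_infDist_line_sq B C I hBCne]
    have h2 : ‖C - B‖ = a := by rw [show C - B = -(B - C) by abel, norm_neg, hnBC]
    have h3 : (a + b + c) ^ 2 * ‖I - B‖ ^ 2 = ⟪(a + b + c) • (I - B), (a + b + c) • (I - B)⟫ := by
      rw [real_inner_smul_left, real_inner_smul_right, real_inner_self_eq_norm_sq]; ring
    rw [hIB] at h3
    simp only [inner_add_left, inner_add_right, real_inner_smul_left, real_inner_smul_right,
      gAA, gCC, gAC, gCA] at h3
    have h4 : (a + b + c) * ⟪I - B, C - B⟫ = ⟪(a + b + c) • (I - B), C - B⟫ := by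
      rw [real_inner_smul_left]
    rw [hIB] at h4
    simp only [inner_add_left, real_inner_smul_left, gAC, gCC] at h4
    have ha2 : a ^ 2 ≠ 0 := pow_ne_zero _ ha0.ne'
    have h1' : r ^ 2 * a ^ 2 = ‖I - B‖ ^ 2 * a ^ 2 - ⟪I - B, C - B⟫ ^ 2 := by
      rw [h1, h2, sub_mul, div_mul_cancel₀ _ ha2]
    refine mul_right_cancel₀ ha2 ?_
    linear_combination 4 * (a + b + c) ^ 2 * h1' + 4 * a ^ 2 * h3
      - 4 * ((a + b + c) * ⟪I - B, C - B⟫ + (a * ((c ^ 2 + a ^ 2 - b ^ 2) / 2) + c * a ^ 2)) * h4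
  -- Gram determinant relation: R² · 16S² = a²b²c²
  have hdep : ¬ LinearIndependent ℝ ![A - O, B - O, C - O] := by
    intro hcon
    have hcard := hcon.fintype_card_le_finrank
    simp [finrank_euclideanSpace_fin] at hcard
  obtain ⟨g, hg, i, hgi⟩ := Fintype.not_linearIndependent_iff.mp hdep
  have hrel : g 0 • (A - O) + g 1 • (B - O) + g 2 • (C - O) = 0 := by
    rw [Fin.sum_univ_three] at hg
    simpa using hg
  have e1 : g 0 * R ^ 2 + g 1 * (R ^ 2 - c ^ 2 / 2) + g 2 * (R ^ 2 - b ^ 2 / 2) = 0 := by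
    have h := congrArg (fun x : E => ⟪A - O, x⟫) hrel
    simp only [inner_add_right, real_inner_smul_right, inner_zero_right,
      huu, huv, huw] at h
    linarith
  have e2 : g 0 * (R ^ 2 - c ^ 2 / 2) + g 1 * R ^ 2 + g 2 * (R ^ 2 - a ^ 2 / 2) = 0 := by
    have h := congrArg (fun x : E => ⟪B - O, x⟫) hrel
    simp only [inner_add_right, real_inner_smul_right, inner_zero_right,
      hvu, hvv, hvw] at h
    linarith
  have e3 : g 0 * (R ^ 2 - b ^ 2 / 2) + g 1 * (R ^ 2 - a ^ 2 / 2) + g 2 * R ^ 2 = 0 := by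
    have h := congrArg (fun x : E => ⟪C - O, x⟫) hrel
    simp only [inner_add_right, real_inner_smul_right, inner_zero_right,
      hwu, hwv, hww] at h
    linarith
  have hdet : (Matrix.of ![![R ^ 2, R ^ 2 - c ^ 2 / 2, R ^ 2 - b ^ 2 / 2],
      ![R ^ 2 - c ^ 2 / 2, R ^ 2, R ^ 2 - a ^ 2 / 2],
      ![R ^ 2 - b ^ 2 / 2, R ^ 2 - a ^ 2 / 2, R ^ 2]]).det = 0 := by
    apply Matrix.exists_mulVec_eq_zero_iff.mp
    refine ⟨![g 0, g 1, g 2], ?_, ?_⟩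
    · intro h0
      apply hgi
      have hz : ∀ j : Fin 3, ![g 0, g 1, g 2] j = 0 := fun j => by rw [h0]; rfl
      fin_cases i
      · simpa using hz 0
      · simpa using hz 1
      · simpa using hz 2
    · funext j
      fin_cases j <;>
        simp [Matrix.mulVec, dotProduct, Fin.sum_univ_three] <;>
        linarith [e1, e2, e3]
  rw [Matrix.det_fin_three] at hdet
  simp only [Matrix.of_apply, Matrix.cons_val', Matrix.cons_val_zero, Matrix.cons_val_one,
    Matrix.head_cons, Matrix.empty_val', Matrix.cons_val_fin_one, Matrix.head_fin_const,
    Matrix.cons_val_two, Matrix.tail_cons] at hdet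
  have hq : R ^ 2 * (2 * a ^ 2 * b ^ 2 + 2 * b ^ 2 * c ^ 2 + 2 * c ^ 2 * a ^ 2
      - a ^ 4 - b ^ 4 - c ^ 4) = a ^ 2 * b ^ 2 * c ^ 2 := by
    linear_combination (4 : ℝ) * hdet
  -- 2(a+b+c) · R · r = abc
  have hr0 : 0 ≤ r := hr ▸ Metric.infDist_nonneg
  have hR0 : 0 ≤ R := hOA ▸ dist_nonneg
  have hRr : R * r * (2 * (a + b + c)) = a * b * c := by
    have hfac : (R * r * (2 * (a + b + c)) - a * b * c)
        * (R * r * (2 * (a + b + c)) + a * b * c) = 0 := by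
      linear_combination R ^ 2 * hE2' + hq
    rcases mul_eq_zero.mp hfac with h | h
    · linarith [sub_eq_zero.mp h]
    · linarith [mul_nonneg (mul_nonneg hR0 hr0) (by positivity : (0:ℝ) ≤ 2 * (a + b + c)),
        mul_pos (mul_pos ha0 hb0) hc0]
  -- final combination
  refine mul_right_cancel₀ (pow_ne_zero 2 hsne) ?_
  linear_combination hE1' + (-2 * (a + b + c)) * hRr + (-3 / 4 : ℝ) * hE2'
    + ((p + (a + b + c) / 2) * (a + b + c) ^ 2) * hp
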